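/- arXiv:2202.10839 — 2 statements merged into one kernel-verified Lean document; each statement's English description precedes it below -/
import Mathlib

section
/- Let ε > 0 and define C₁ = sup{ ‖p‖_{[-1,1],∞} : p ∈ span{ζ_i : σ_i > ε}, ‖p‖_{m,∞} ≤ 1 }. Then the condition number of the (linear) operator Q_ε, namely κ = sup{ ‖Q_ε(q)‖_{[-1,1],∞} : q continuous on [-1,1], ‖q‖_{m,∞} ≤ 1 }, satisfies C₁ ≤ κ ≤ √(m+1)·C₁. -/
open MeasureTheory Finset

noncomputable section

/-- The equispaced node `x_k = -1 + 2k/m` in `[-1,1]`. -/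
def node (m k : ℕ) : ℝ := -1 + 2 * (k : ℝ) / (m : ℝ)

/-- The discrete semi-inner product `⟨f,g⟩_{m,2} = (2/(m+1)) Σ_{k=0}^m f(x_k) conj(g(x_k))`. -/
def discInner (m : ℕ) (f g : ℝ → ℂ) : ℂ :=
  (2 / ((m : ℂ) + 1)) * ∑ k ∈ Finset.range (m + 1), f (node m k) * (starRingEnd ℂ) (g (node m k))

/-- The discrete `ℓ²` semi-norm `‖f‖_{m,2}`. -/
def discNorm (m : ℕ) (f : ℝ → ℂ) : ℝ :=
  Real.sqrt ((2 / ((m : ℝ) + 1)) * ∑ k ∈ Finset.range (m + 1), ‖f (node m k)‖ ^ 2)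

/-- The discrete sup semi-norm `‖f‖_{m,∞} = max_{0 ≤ k ≤ m} |f(x_k)|`. -/
def discSup (m : ℕ) (f : ℝ → ℂ) : ℝ :=
  ⨆ k : Fin (m + 1), ‖f (node m (k : ℕ))‖

/-- The uniform norm `‖f‖_{I,∞} = sup_{x ∈ I} |f(x)|`. -/
def supNorm (I : Set ℝ) (f : ℝ → ℂ) : ℝ :=
  ⨆ x : I, ‖f (x : ℝ)‖

/-- The Jacobi-type weight `w_γ^{(α,β)}(x) = (1 - x/γ)^α (1 + x/γ)^β`. -/
def jweight (α β γ x : ℝ) : ℝ := (1 - x / γ) ^ α * (1 + x / γ) ^ β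

/-- The weighted `L²` inner product `⟨f,g⟩_w = ∫_{-γ}^{γ} f conj(g) w_γ^{(α,β)}`. -/
def wInner (α β γ : ℝ) (f g : ℝ → ℂ) : ℂ :=
  ∫ x in (-γ)..γ, f x * (starRingEnd ℂ) (g x) * ((jweight α β γ x : ℝ) : ℂ)

/-- The weighted `L²` norm `‖f‖_w`. -/
def wNorm (α β γ : ℝ) (f : ℝ → ℂ) : ℝ :=
  Real.sqrt (∫ x in (-γ)..γ, ‖f x‖ ^ 2 * jweight α β γ x)

/-- `h₀^{(α,β)} = 2^{α+β+1} Γ(α+1) Γ(β+1) / ((α+β+1) Γ(α+β+1))`. -/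
def h0 (α β : ℝ) : ℝ :=
  2 ^ (α + β + 1) * Real.Gamma (α + 1) * Real.Gamma (β + 1) /
    ((α + β + 1) * Real.Gamma (α + β + 1))

/-- A complex polynomial regarded as a function of a real variable. -/
def pf (p : Polynomial ℂ) : ℝ → ℂ := fun x => p.eval (x : ℂ)

/-- The constant `c_{n,γ,α,β} = max_{x ∈ [-γ,γ]} (Σ_{i=0}^n |φ_i(x)|²)^{1/2}`. -/
def cConst (n : ℕ) (γ : ℝ) (φ : ℕ → Polynomial ℂ) : ℝ :=
  ⨆ x : Set.Icc (-γ) γ,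
    Real.sqrt (∑ i ∈ Finset.range (n + 1), ‖pf (φ i) (x : ℝ)‖ ^ 2)

/-- The regularized frame approximation operator
`Q_δ(f) = Σ_{i : σ_i > δ} σ_i^{-2} ⟨f,ζ_i⟩_{m,2} ζ_i`. -/
def Qop (m n : ℕ) (ζ : Fin (n + 1) → Polynomial ℂ) (σ : Fin (n + 1) → ℝ) (δ : ℝ)
    (f : ℝ → ℂ) : ℝ → ℂ :=
  fun x => ∑ i ∈ Finset.univ.filter (fun i : Fin (n + 1) => δ < σ i),
    (discInner m f (pf (ζ i)) / ((σ i ^ 2 : ℝ) : ℂ)) * pf (ζ i) x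

/-- The quantity `C(m,n,γ,δ) = sup{‖p‖_{[-1,1],∞} : p ∈ P_n, ‖p‖_{m,∞} ≤ 1,
‖p‖_{[-γ,γ],∞} ≤ δ⁻¹}`. -/
def Cquant (m n : ℕ) (γ δ : ℝ) : ℝ :=
  sSup {r : ℝ | ∃ p : Polynomial ℂ, p.natDegree ≤ n ∧ discSup m (pf p) ≤ 1 ∧
    supNorm (Set.Icc (-γ) γ) (pf p) ≤ δ⁻¹ ∧ r = supNorm (Set.Icc (-1) 1) (pf p)}

/-- The constant `C₁ = sup{‖p‖_{[-1,1],∞} : p ∈ span{ζ_i : σ_i > ε}, ‖p‖_{m,∞} ≤ 1}`. -/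
def C1const (m n : ℕ) (ζ : Fin (n + 1) → Polynomial ℂ) (σ : Fin (n + 1) → ℝ) (ε : ℝ) : ℝ :=
  sSup {r : ℝ | ∃ p : Polynomial ℂ, p ∈ Submodule.span ℂ (ζ '' {i | ε < σ i}) ∧
    discSup m (pf p) ≤ 1 ∧ r = supNorm (Set.Icc (-1) 1) (pf p)}

/-- The constant `C₂ = sup{‖p - Q_ε(p)‖_{[-1,1],∞} : p ∈ P_n, ‖p‖_{[-γ,γ],∞} ≤ ε⁻¹}`. -/
def C2const (m n : ℕ) (γ : ℝ) (ζ : Fin (n + 1) → Polynomial ℂ) (σ : Fin (n + 1) → ℝ)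
    (ε : ℝ) : ℝ :=
  sSup {r : ℝ | ∃ p : Polynomial ℂ, p.natDegree ≤ n ∧
    supNorm (Set.Icc (-γ) γ) (pf p) ≤ ε⁻¹ ∧
    r = supNorm (Set.Icc (-1) 1) (fun x => pf p x - Qop m n ζ σ ε (pf p) x)}

/-- The condition number `κ(Q_δ) = sup{‖Q_δ(q)‖_{[-1,1],∞} : q ∈ C([-1,1]), ‖q‖_{m,∞} ≤ 1}`. -/
def kappa (m n : ℕ) (ζ : Fin (n + 1) → Polynomial ℂ) (σ : Fin (n + 1) → ℝ) (δ : ℝ) : ℝ :=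
  sSup {r : ℝ | ∃ q : ℝ → ℂ, ContinuousOn q (Set.Icc (-1) 1) ∧ discSup m q ≤ 1 ∧
    r = supNorm (Set.Icc (-1) 1) (Qop m n ζ σ δ q)}

/-- The Bernstein ellipse `E_θ = {(z + z⁻¹)/2 : 1 ≤ |z| ≤ θ}`. -/
def bernsteinEllipse (θ : ℝ) : Set ℂ :=
  {w | ∃ z : ℂ, 1 ≤ ‖z‖ ∧ ‖z‖ ≤ θ ∧ w = (z + z⁻¹) / 2}

/-- The uniform norm on a subset of `ℂ`. -/
def supNormC (E : Set ℂ) (f : ℂ → ℂ) : ℝ :=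
  ⨆ z : E, ‖f (z : ℂ)‖

/-- The `C^k` norm `‖f‖_{C^k([-1,1])} = max_{0 ≤ j ≤ k} ‖f^{(j)}‖_{[-1,1],∞}`. -/
def CkNorm (k : ℕ) (f : ℝ → ℂ) : ℝ :=
  ⨆ j : Fin (k + 1), supNorm (Set.Icc (-1) 1) (iteratedDerivWithin (j : ℕ) f (Set.Icc (-1) 1))

/-! ### Auxiliary machinery for statement 6 -/

/-- Weighted node-sampling map into Euclidean space. -/
def vmap (m : ℕ) (f : ℝ → ℂ) : EuclideanSpace ℂ (Fin (m+1)) :=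
  WithLp.toLp 2 (fun k => ((Real.sqrt (2 / ((m:ℝ)+1)) : ℝ) : ℂ) * f (node m (k : ℕ)))

lemma c_nonneg (m : ℕ) : (0:ℝ) ≤ 2 / ((m:ℝ)+1) := by positivity

lemma vmap_inner (m : ℕ) (f g : ℝ → ℂ) :
    (inner ℂ (vmap m f) (vmap m g) : ℂ) = discInner m g f := by
  simp only [PiLp.inner_apply, RCLike.inner_apply, vmap, map_mul, Complex.conj_ofReal]
  rw [discInner]
  rw [← Fin.sum_univ_eq_sum_range (fun k => g (node m k) * (starRingEnd ℂ) (f (node m k))) (m+1)]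
  rw [Finset.mul_sum]
  apply Finset.sum_congr rfl
  intro k _
  have hs : ((Real.sqrt (2 / ((m:ℝ)+1)) : ℝ) : ℂ) * ((Real.sqrt (2 / ((m:ℝ)+1)) : ℝ) : ℂ)
      = (2 / ((m:ℂ)+1)) := by
    rw [← Complex.ofReal_mul, Real.mul_self_sqrt (c_nonneg m)]
    push_cast
    ring
  rw [← hs]
  ring

lemma vmap_norm_sq (m : ℕ) (f : ℝ → ℂ) :
    ‖vmap m f‖^2 = (2 / ((m:ℝ)+1)) * ∑ k ∈ Finset.range (m + 1), ‖f (node m k)‖ ^ 2 := by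
  rw [EuclideanSpace.norm_eq, Real.sq_sqrt (by positivity)]
  rw [← Fin.sum_univ_eq_sum_range (fun k => ‖f (node m k)‖ ^ 2) (m+1), Finset.mul_sum]
  apply Finset.sum_congr rfl
  intro k _
  simp only [vmap, norm_mul, Complex.norm_real, Real.norm_eq_abs]
  rw [abs_of_nonneg (Real.sqrt_nonneg _), mul_pow, Real.sq_sqrt (c_nonneg m)]

lemma abs_le_discSup (m : ℕ) (f : ℝ → ℂ) (k : Fin (m+1)) :
    ‖f (node m (k:ℕ))‖ ≤ discSup m f :=
  le_ciSup (Finite.bddAbove_range (fun j : Fin (m+1) => ‖f (node m (j:ℕ))‖)) k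

lemma discSup_nonneg (m : ℕ) (f : ℝ → ℂ) : 0 ≤ discSup m f :=
  Real.iSup_nonneg (fun k => norm_nonneg _)

lemma vmap_norm_le (m : ℕ) (f : ℝ → ℂ) : ‖vmap m f‖ ≤ Real.sqrt 2 * discSup m f := by
  have hsq : ‖vmap m f‖^2 ≤ 2 * discSup m f ^ 2 := by
    rw [vmap_norm_sq]
    have hsum : ∑ k ∈ Finset.range (m + 1), ‖f (node m k)‖ ^ 2
        ≤ (m+1) * discSup m f ^ 2 := by
      have := Finset.sum_le_card_nsmul (Finset.range (m+1))
        (fun k => ‖f (node m k)‖ ^ 2) (discSup m f ^ 2) (by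
          intro k hk
          have hk' : k < m + 1 := Finset.mem_range.mp hk
          have := abs_le_discSup m f ⟨k, hk'⟩
          exact pow_le_pow_left₀ (norm_nonneg _) this 2)
      simpa [Finset.card_range, nsmul_eq_mul] using this
    have hm : (0:ℝ) < (m:ℝ) + 1 := by positivity
    calc (2 / ((m:ℝ)+1)) * ∑ k ∈ Finset.range (m + 1), ‖f (node m k)‖ ^ 2
        ≤ (2 / ((m:ℝ)+1)) * ((m+1) * discSup m f ^ 2) := by
          apply mul_le_mul_of_nonneg_left hsum (by positivity)
      _ = 2 * discSup m f ^ 2 := by field_simp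
  have h1 : ‖vmap m f‖ = Real.sqrt (‖vmap m f‖^2) := (Real.sqrt_sq (norm_nonneg _)).symm
  rw [h1]
  calc Real.sqrt (‖vmap m f‖^2) ≤ Real.sqrt (2 * discSup m f ^ 2) := Real.sqrt_le_sqrt hsq
    _ = Real.sqrt 2 * discSup m f := by
        rw [Real.sqrt_mul (by norm_num), Real.sqrt_sq (discSup_nonneg m f)]

lemma discSup_le_vmap (m : ℕ) (f : ℝ → ℂ) :
    discSup m f ≤ Real.sqrt (((m:ℝ)+1)/2) * ‖vmap m f‖ := by
  apply ciSup_le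
  intro k
  have h1 : ‖f (node m (k:ℕ))‖ ^ 2 ≤ (((m:ℝ)+1)/2) * ‖vmap m f‖^2 := by
    rw [vmap_norm_sq]
    have hterm : ‖f (node m (k:ℕ))‖ ^ 2
        ≤ ∑ j ∈ Finset.range (m + 1), ‖f (node m j)‖ ^ 2 :=
      Finset.single_le_sum (f := fun j => ‖f (node m j)‖ ^ 2)
        (fun j _ => by positivity) (Finset.mem_range.mpr k.isLt)
    have hm : (0:ℝ) < (m:ℝ) + 1 := by positivity
    calc ‖f (node m (k:ℕ))‖ ^ 2
        ≤ ∑ j ∈ Finset.range (m + 1), ‖f (node m j)‖ ^ 2 := hterm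
      _ = (((m:ℝ)+1)/2) * ((2 / ((m:ℝ)+1)) * ∑ j ∈ Finset.range (m + 1),
            ‖f (node m j)‖ ^ 2) := by field_simp
  calc ‖f (node m (k:ℕ))‖
      = Real.sqrt (‖f (node m (k:ℕ))‖ ^ 2) :=
        (Real.sqrt_sq (norm_nonneg _)).symm
    _ ≤ Real.sqrt ((((m:ℝ)+1)/2) * ‖vmap m f‖^2) := Real.sqrt_le_sqrt h1
    _ = Real.sqrt (((m:ℝ)+1)/2) * ‖vmap m f‖ := by
        rw [Real.sqrt_mul (by positivity), Real.sqrt_sq (norm_nonneg _)]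

def onb (m n : ℕ) (ζ : Fin (n + 1) → Polynomial ℂ) (σ : Fin (n + 1) → ℝ)
    (i : Fin (n+1)) : EuclideanSpace ℂ (Fin (m+1)) :=
  ((((σ i)⁻¹ : ℝ)) : ℂ) • vmap m (pf (ζ i))

lemma discInner_conj (m' : ℕ) (f g : ℝ → ℂ) :
    discInner m' f g = (starRingEnd ℂ) (discInner m' g f) := by
  simp only [discInner, map_mul, map_sum, Complex.conj_conj, map_div₀, map_ofNat]
  rw [show (starRingEnd ℂ) ((m':ℂ)+1) = (m':ℂ)+1 by
    simp [Complex.ext_iff]]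
  congr 1
  apply Finset.sum_congr rfl
  intro k _
  ring

lemma onb_orthonormal (m n : ℕ) (ζ : Fin (n + 1) → Polynomial ℂ) (σ : Fin (n + 1) → ℝ)
    (hσ : ∀ i, 0 < σ i)
    (hζd : ∀ i j, discInner m (pf (ζ i)) (pf (ζ j)) =
      if i = j then (((σ i) ^ 2 : ℝ) : ℂ) else 0) :
    Orthonormal ℂ (onb m n ζ σ) := by
  rw [orthonormal_iff_ite]
  intro i j
  simp only [onb, inner_smul_left, inner_smul_right, Complex.conj_ofReal]
  rw [vmap_inner, hζd j i]
  by_cases h : i = j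
  · subst h
    simp only [if_pos rfl]
    have h1' : ((σ i : ℝ) : ℂ) ≠ 0 := by
      exact_mod_cast ne_of_gt (hσ i)
    push_cast
    field_simp
  · rw [if_neg (fun hh => h hh.symm), if_neg h]
    simp

lemma key_bound (m n : ℕ) (ζ : Fin (n + 1) → Polynomial ℂ) (σ : Fin (n + 1) → ℝ)
    (hσ : ∀ i, 0 < σ i)
    (hζd : ∀ i j, discInner m (pf (ζ i)) (pf (ζ j)) =
      if i = j then (((σ i) ^ 2 : ℝ) : ℂ) else 0)
    (ε : ℝ) (q : ℝ → ℂ) :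
    discSup m (Qop m n ζ σ ε q) ≤ Real.sqrt ((m:ℝ)+1) * discSup m q := by
  classical
  set S := Finset.univ.filter (fun i : Fin (n + 1) => ε < σ i) with hS
  set l : Fin (n+1) → ℂ := fun i =>
    discInner m q (pf (ζ i)) / ((σ i : ℝ) : ℂ) with hl
  have hvq : vmap m (Qop m n ζ σ ε q) = ∑ i ∈ S, l i • onb m n ζ σ i := by
    ext k
    rw [show (∑ i ∈ S, l i • onb m n ζ σ i) k = ∑ i ∈ S, (l i • onb m n ζ σ i) k from
      by rw [WithLp.ofLp_sum, Finset.sum_apply]]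
    simp only [vmap, Qop, Finset.mul_sum, onb, PiLp.smul_apply, smul_eq_mul]
    apply Finset.sum_congr rfl
    intro i _
    have h1 : (σ i : ℝ) ≠ 0 := ne_of_gt (hσ i)
    have h1' : ((σ i : ℝ) : ℂ) ≠ 0 := by exact_mod_cast h1
    simp only [vmap, hl]
    push_cast
    field_simp
  have hli : ∀ i, l i = inner ℂ (onb m n ζ σ i) (vmap m q) := by
    intro i
    rw [onb, inner_smul_left, vmap_inner, Complex.conj_ofReal]
    rw [discInner_conj m q, ← discInner_conj]
    rw [hl]
    have h1 : (σ i : ℝ) ≠ 0 := ne_of_gt (hσ i)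
    push_cast
    field_simp
  have hnorm : ‖vmap m (Qop m n ζ σ ε q)‖^2 ≤ ‖vmap m q‖^2 := by
    have horth := onb_orthonormal m n ζ σ hσ hζd
    have h2 : (inner ℂ (vmap m (Qop m n ζ σ ε q)) (vmap m (Qop m n ζ σ ε q)) : ℂ)
        = ∑ i ∈ S, (starRingEnd ℂ) (l i) * l i := by
      rw [hvq]; exact horth.inner_sum l l S
    have h3 : ‖vmap m (Qop m n ζ σ ε q)‖^2 = ∑ i ∈ S, ‖l i‖^2 := by
      have := inner_self_eq_norm_sq (𝕜 := ℂ) (vmap m (Qop m n ζ σ ε q))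
      rw [← this, h2]
      simp only [RCLike.re_to_complex]
      rw [Complex.re_sum]
      apply Finset.sum_congr rfl
      intro i _
      rw [RCLike.conj_mul]
      norm_cast
    rw [h3]
    calc ∑ i ∈ S, ‖l i‖^2 = ∑ i ∈ S, ‖(inner ℂ (onb m n ζ σ i) (vmap m q) : ℂ)‖^2 := by
          apply Finset.sum_congr rfl; intro i _; rw [hli]
      _ ≤ ‖vmap m q‖^2 := horth.sum_inner_products_le _
  have hnorm' : ‖vmap m (Qop m n ζ σ ε q)‖ ≤ ‖vmap m q‖ := by
    have := Real.sqrt_le_sqrt hnorm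
    rwa [Real.sqrt_sq (norm_nonneg _), Real.sqrt_sq (norm_nonneg _)] at this
  calc discSup m (Qop m n ζ σ ε q)
      ≤ Real.sqrt (((m:ℝ)+1)/2) * ‖vmap m (Qop m n ζ σ ε q)‖ := discSup_le_vmap m _
    _ ≤ Real.sqrt (((m:ℝ)+1)/2) * ‖vmap m q‖ := by
        apply mul_le_mul_of_nonneg_left hnorm' (Real.sqrt_nonneg _)
    _ ≤ Real.sqrt (((m:ℝ)+1)/2) * (Real.sqrt 2 * discSup m q) := by
        apply mul_le_mul_of_nonneg_left (vmap_norm_le m q) (Real.sqrt_nonneg _)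
    _ = Real.sqrt ((m:ℝ)+1) * discSup m q := by
        rw [← mul_assoc, ← Real.sqrt_mul (by positivity)]
        congr 2
        field_simp

lemma discInner_add_left (m : ℕ) (f g h : ℝ → ℂ) :
    discInner m (fun x => f x + g x) h = discInner m f h + discInner m g h := by
  simp only [discInner, add_mul, Finset.sum_add_distrib, mul_add]

lemma discInner_smul_left (m : ℕ) (c : ℂ) (f h : ℝ → ℂ) :
    discInner m (fun x => c * f x) h = c * discInner m f h := by
  simp only [discInner, Finset.mul_sum]
  apply Finset.sum_congr rfl
  intro k _
  ring

lemma discInner_zero_left (m : ℕ) (h : ℝ → ℂ) :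
    discInner m (fun _ => 0) h = 0 := by
  simp [discInner]

lemma Qop_repro (m n : ℕ) (ζ : Fin (n + 1) → Polynomial ℂ) (σ : Fin (n + 1) → ℝ)
    (hσ : ∀ i, 0 < σ i)
    (hζd : ∀ i j, discInner m (pf (ζ i)) (pf (ζ j)) =
      if i = j then (((σ i) ^ 2 : ℝ) : ℂ) else 0)
    (ε : ℝ) (p : Polynomial ℂ) (hp : p ∈ Submodule.span ℂ (ζ '' {i | ε < σ i})) :
    ∀ x, Qop m n ζ σ ε (pf p) x = pf p x := by
  induction hp using Submodule.span_induction with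
  | mem p hpmem =>
    obtain ⟨j, hj, rfl⟩ := hpmem
    intro x
    rw [Qop]
    rw [Finset.sum_eq_single_of_mem j
      (by simp only [Finset.mem_filter, Finset.mem_univ, true_and]; exact hj)]
    · rw [hζd j j, if_pos rfl]
      have h1 : ((σ j ^ 2 : ℝ) : ℂ) ≠ 0 :=
        Complex.ofReal_ne_zero.mpr (pow_ne_zero 2 (ne_of_gt (hσ j)))
      rw [div_self h1, one_mul]
    · intro i _ hij
      rw [hζd j i, if_neg (fun hh => hij hh.symm)]
      simp
  | zero =>
    intro x
    have h0 : pf (0 : Polynomial ℂ) = fun _ => (0:ℂ) := by funext y; simp [pf]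
    rw [h0, Qop]
    simp [discInner_zero_left]
  | add p q hpmem hqmem hp hq =>
    intro x
    have hpq : pf (p + q) = fun y => pf p y + pf q y := by funext y; simp [pf]
    rw [hpq]
    simp only [Qop, discInner_add_left, add_div, add_mul, Finset.sum_add_distrib]
    rw [← hp x, ← hq x]
    simp [Qop]
  | smul c p hpmem hp =>
    intro x
    have hcp : pf (c • p) = fun y => c * pf p y := by funext y; simp [pf]
    rw [hcp]
    simp only [Qop, discInner_smul_left, mul_div_assoc]
    rw [← hp x]
    simp only [Qop, Finset.mul_sum]
    apply Finset.sum_congr rfl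
    intro i _
    ring

def Qpoly (m n : ℕ) (ζ : Fin (n + 1) → Polynomial ℂ) (σ : Fin (n + 1) → ℝ) (δ : ℝ)
    (q : ℝ → ℂ) : Polynomial ℂ :=
  ∑ i ∈ Finset.univ.filter (fun i : Fin (n + 1) => δ < σ i),
    (discInner m q (pf (ζ i)) / ((σ i ^ 2 : ℝ) : ℂ)) • ζ i

lemma pf_Qpoly (m n : ℕ) (ζ : Fin (n + 1) → Polynomial ℂ) (σ : Fin (n + 1) → ℝ) (δ : ℝ)
    (q : ℝ → ℂ) (x : ℝ) : pf (Qpoly m n ζ σ δ q) x = Qop m n ζ σ δ q x := by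
  simp [Qpoly, Qop, pf, Polynomial.eval_finset_sum, Polynomial.eval_smul, smul_eq_mul]

lemma Qpoly_mem (m n : ℕ) (ζ : Fin (n + 1) → Polynomial ℂ) (σ : Fin (n + 1) → ℝ) (δ : ℝ)
    (q : ℝ → ℂ) : Qpoly m n ζ σ δ q ∈ Submodule.span ℂ (ζ '' {i | δ < σ i}) := by
  apply Submodule.sum_mem
  intro i hi
  apply Submodule.smul_mem
  apply Submodule.subset_span
  exact ⟨i, (Finset.mem_filter.mp hi).2, rfl⟩

lemma discInner_abs_le (m : ℕ) (q g : ℝ → ℂ) :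
    ‖discInner m q g‖ ≤
      discSup m q * ((2 / ((m:ℝ)+1)) * ∑ k ∈ Finset.range (m+1), ‖g (node m k)‖) := by
  rw [discInner]
  rw [norm_mul]
  have h1 : ‖2 / ((m:ℂ)+1)‖ = 2 / ((m:ℝ)+1) := by
    rw [norm_div]
    norm_num
    rw [show ((m:ℂ)+1) = (((m:ℝ)+1 : ℝ) : ℂ) by push_cast; ring, Complex.norm_real, Real.norm_eq_abs,
      abs_of_pos (by positivity)]
  rw [h1]
  have h2 : ‖∑ k ∈ Finset.range (m + 1), q (node m k) * (starRingEnd ℂ) (g (node m k))‖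
      ≤ ∑ k ∈ Finset.range (m + 1), discSup m q * ‖g (node m k)‖ := by
    refine (norm_sum_le _ _).trans ?_
    apply Finset.sum_le_sum
    intro k hk
    rw [norm_mul, Complex.norm_conj]
    exact mul_le_mul_of_nonneg_right (abs_le_discSup m q ⟨k, Finset.mem_range.mp hk⟩)
      (norm_nonneg _)
  calc 2 / ((m:ℝ)+1) * ‖∑ k ∈ Finset.range (m + 1),
        q (node m k) * (starRingEnd ℂ) (g (node m k))‖
      ≤ 2 / ((m:ℝ)+1) * ∑ k ∈ Finset.range (m + 1), discSup m q * ‖g (node m k)‖ :=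
        mul_le_mul_of_nonneg_left h2 (by positivity)
    _ = discSup m q * ((2 / ((m:ℝ)+1)) * ∑ k ∈ Finset.range (m+1),
          ‖g (node m k)‖) := by
        simp only [Finset.mul_sum]
        apply Finset.sum_congr rfl
        intro k _
        ring

set_option maxHeartbeats 1000000 in
/-- a uniform pointwise bound for `Qop` on `[-1,1]` in terms of `discSup`. -/
lemma Qop_pointwise_bound (m n : ℕ) (ζ : Fin (n + 1) → Polynomial ℂ) (σ : Fin (n + 1) → ℝ)
    (hσ : ∀ i, 0 < σ i) (δ : ℝ) :
    ∃ B : ℝ, 0 ≤ B ∧ ∀ q : ℝ → ℂ, ∀ x ∈ Set.Icc (-1:ℝ) 1,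
      ‖Qop m n ζ σ δ q x‖ ≤ B * discSup m q := by
  have hBi : ∀ i : Fin (n+1), ∃ C : ℝ, ∀ x ∈ Set.Icc (-1:ℝ) 1, ‖pf (ζ i) x‖ ≤ C := by
    intro i
    obtain ⟨C, hC⟩ := IsCompact.exists_bound_of_continuousOn (isCompact_Icc (a := (-1:ℝ)) (b := 1))
      (Continuous.continuousOn (by
        exact ((ζ i).continuous_aeval).comp Complex.continuous_ofReal))
    exact ⟨C, fun x hx => by simpa [pf] using hC x hx⟩
  choose Bi hBi' using hBi
  set K : Fin (n+1) → ℝ := fun i =>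
    (2 / ((m:ℝ)+1)) * ∑ k ∈ Finset.range (m+1), ‖pf (ζ i) (node m k)‖ with hK
  have hK0 : ∀ i, 0 ≤ K i := by
    intro i
    apply mul_nonneg (by positivity)
    exact Finset.sum_nonneg fun k _ => norm_nonneg _
  refine ⟨∑ i ∈ Finset.univ.filter (fun i : Fin (n + 1) => δ < σ i),
    K i * max (Bi i) 0 / (σ i)^2, ?_, ?_⟩
  · apply Finset.sum_nonneg
    intro i _
    have := hσ i
    positivity
  · intro q x hx
    rw [Qop]
    refine (norm_sum_le _ _).trans ?_
    rw [Finset.sum_mul]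
    apply Finset.sum_le_sum
    intro i _
    rw [norm_mul, norm_div]
    have hb : ‖pf (ζ i) x‖ ≤ max (Bi i) 0 :=
      le_max_of_le_left (hBi' i x hx)
    have hd : ‖discInner m q (pf (ζ i))‖ ≤ discSup m q * K i := discInner_abs_le m q _
    have hs : ‖((σ i ^ 2 : ℝ) : ℂ)‖ = (σ i)^2 := by
      rw [Complex.norm_real, Real.norm_eq_abs, abs_of_pos (by have := hσ i; positivity)]
    rw [hs]
    have h3 : ‖discInner m q (pf (ζ i))‖ / (σ i)^2 * ‖pf (ζ i) x‖
        ≤ (discSup m q * K i) / (σ i)^2 * max (Bi i) 0 := by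
      have hσi : (0:ℝ) < σ i := hσ i
      have h4 : ‖discInner m q (pf (ζ i))‖ / (σ i)^2
          ≤ (discSup m q * K i) / (σ i)^2 :=
        (div_le_div_iff_of_pos_right (by positivity)).mpr hd
      apply mul_le_mul h4 hb (norm_nonneg _)
      have := discSup_nonneg m q
      have := hK0 i
      positivity
    refine h3.trans ?_
    apply le_of_eq
    ring

/-- the condition number of `Q_ε` satisfies `C₁ ≤ κ ≤ √(m+1) C₁`. -/
theorem stmt6 (α β γ : ℝ) (hα : -1 < α) (hβ : -1 < β) (hγ : 1 < γ)
    (m n : ℕ) (hn : 1 ≤ n) (hmn : n ≤ m)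
    (ζ : Fin (n + 1) → Polynomial ℂ) (σ : Fin (n + 1) → ℝ) (hσ : ∀ i, 0 < σ i)
    (hζdeg : ∀ i, (ζ i).natDegree ≤ n)
    (hζspan : ∀ p : Polynomial ℂ, p.natDegree ≤ n → p ∈ Submodule.span ℂ (Set.range ζ))
    (hζw : ∀ i j, wInner α β γ (pf (ζ i)) (pf (ζ j)) = if i = j then 1 else 0)
    (hζd : ∀ i j, discInner m (pf (ζ i)) (pf (ζ j)) =
      if i = j then (((σ i) ^ 2 : ℝ) : ℂ) else 0)
    (ε : ℝ) (hε : 0 < ε) :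
    C1const m n ζ σ ε ≤ kappa m n ζ σ ε ∧
    kappa m n ζ σ ε ≤ Real.sqrt ((m : ℝ) + 1) * C1const m n ζ σ ε := by
  classical
  obtain ⟨B, hB0, hB⟩ := Qop_pointwise_bound m n ζ σ hσ ε
  haveI hne : Nonempty ↥(Set.Icc (-1:ℝ) 1) := ⟨⟨0, by norm_num⟩⟩
  have hsqrt_pos : (0:ℝ) < Real.sqrt ((m:ℝ)+1) := Real.sqrt_pos.mpr (by positivity)
  have hsupQ : ∀ q : ℝ → ℂ, supNorm (Set.Icc (-1) 1) (Qop m n ζ σ ε q) ≤ B * discSup m q := by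
    intro q
    unfold supNorm
    apply ciSup_le
    intro x
    exact hB q x x.2
  have hS1bdd : BddAbove {r : ℝ | ∃ p : Polynomial ℂ,
      p ∈ Submodule.span ℂ (ζ '' {i | ε < σ i}) ∧ discSup m (pf p) ≤ 1 ∧
      r = supNorm (Set.Icc (-1) 1) (pf p)} := by
    refine ⟨B, ?_⟩
    rintro r ⟨p, hmem, hd1, rfl⟩
    have hrepro := Qop_repro m n ζ σ hσ hζd ε p hmem
    have heq : supNorm (Set.Icc (-1) 1) (pf p)
        = supNorm (Set.Icc (-1) 1) (Qop m n ζ σ ε (pf p)) := by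
      unfold supNorm
      exact iSup_congr fun x => by rw [hrepro x]
    rw [heq]
    calc supNorm (Set.Icc (-1) 1) (Qop m n ζ σ ε (pf p)) ≤ B * discSup m (pf p) := hsupQ (pf p)
      _ ≤ B * 1 := mul_le_mul_of_nonneg_left hd1 hB0
      _ = B := mul_one B
  have hκbdd : BddAbove {r : ℝ | ∃ q : ℝ → ℂ, ContinuousOn q (Set.Icc (-1) 1) ∧
      discSup m q ≤ 1 ∧ r = supNorm (Set.Icc (-1) 1) (Qop m n ζ σ ε q)} := by
    refine ⟨B, ?_⟩
    rintro r ⟨q, hqc, hq1, rfl⟩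
    calc supNorm (Set.Icc (-1) 1) (Qop m n ζ σ ε q) ≤ B * discSup m q := hsupQ q
      _ ≤ B * 1 := mul_le_mul_of_nonneg_left hq1 hB0
      _ = B := mul_one B
  constructor
  · unfold C1const kappa
    apply csSup_le_csSup hκbdd
    · refine ⟨supNorm (Set.Icc (-1) 1) (pf 0), 0, Submodule.zero_mem _, ?_, rfl⟩
      have h0 : discSup m (pf (0 : Polynomial ℂ)) = 0 := by
        simp [discSup, pf]
      rw [h0]; norm_num
    · rintro r ⟨p, hmem, hd1, rfl⟩
      refine ⟨pf p, ?_, hd1, ?_⟩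
      · exact (Continuous.comp p.continuous Complex.continuous_ofReal).continuousOn
      · unfold supNorm
        exact (iSup_congr fun x => by
          rw [Qop_repro m n ζ σ hσ hζd ε p hmem (x:ℝ)]).symm
  · unfold kappa
    apply csSup_le
    · refine ⟨supNorm (Set.Icc (-1) 1) (Qop m n ζ σ ε (fun _ => 0)), fun _ => 0,
        continuousOn_const, ?_, rfl⟩
      have h0 : discSup m (fun _ : ℝ => (0:ℂ)) = 0 := by simp [discSup]
      rw [h0]; norm_num
    rintro r ⟨q, hqc, hq1, rfl⟩
    set c : ℝ := (Real.sqrt ((m:ℝ)+1))⁻¹ with hc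
    have hc0 : 0 < c := by rw [hc]; positivity
    set P' : Polynomial ℂ := ((c : ℝ) : ℂ) • Qpoly m n ζ σ ε q with hP'
    have hP'mem : P' ∈ Submodule.span ℂ (ζ '' {i | ε < σ i}) :=
      Submodule.smul_mem _ _ (Qpoly_mem m n ζ σ ε q)
    have hP'x : ∀ x : ℝ, pf P' x = ((c : ℝ) : ℂ) * Qop m n ζ σ ε q x := by
      intro x
      rw [hP']
      have := pf_Qpoly m n ζ σ ε q x
      simp only [pf, Polynomial.eval_smul, smul_eq_mul] at this ⊢
      rw [this]
    have habs : ∀ x : ℝ, ‖pf P' x‖ = c * ‖Qop m n ζ σ ε q x‖ := by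
      intro x
      rw [hP'x, norm_mul, Complex.norm_real, Real.norm_eq_abs, abs_of_pos hc0]
    have hd1 : discSup m (pf P') ≤ 1 := by
      unfold discSup
      apply ciSup_le
      intro k
      rw [habs]
      have h1 : ‖Qop m n ζ σ ε q (node m (k:ℕ))‖
          ≤ Real.sqrt ((m:ℝ)+1) * discSup m q :=
        (abs_le_discSup m _ k).trans (key_bound m n ζ σ hσ hζd ε q)
      calc c * ‖Qop m n ζ σ ε q (node m (k:ℕ))‖
          ≤ c * (Real.sqrt ((m:ℝ)+1) * discSup m q) :=
            mul_le_mul_of_nonneg_left h1 hc0.le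
        _ = discSup m q := by
            rw [hc, ← mul_assoc, inv_mul_cancel₀ (ne_of_gt hsqrt_pos), one_mul]
        _ ≤ 1 := hq1
    have h5 : supNorm (Set.Icc (-1) 1) (pf P') ≤ C1const m n ζ σ ε := by
      apply le_csSup hS1bdd
      exact ⟨P', hP'mem, hd1, rfl⟩
    have hbddP' : BddAbove (Set.range fun x : ↥(Set.Icc (-1:ℝ) 1) =>
        ‖pf P' (x:ℝ)‖) := by
      refine ⟨c * (B * discSup m q), ?_⟩
      rintro y ⟨x, rfl⟩
      show ‖pf P' (x:ℝ)‖ ≤ c * (B * discSup m q)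
      rw [habs]
      exact mul_le_mul_of_nonneg_left (hB q x x.2) hc0.le
    unfold supNorm
    apply ciSup_le
    intro x
    have h6 : ‖Qop m n ζ σ ε q (x:ℝ)‖
        = Real.sqrt ((m:ℝ)+1) * ‖pf P' (x:ℝ)‖ := by
      rw [habs, ← mul_assoc, mul_inv_cancel₀ (ne_of_gt hsqrt_pos), one_mul]
    rw [h6]
    have h7 : ‖pf P' (x:ℝ)‖ ≤ supNorm (Set.Icc (-1) 1) (pf P') :=
      le_ciSup hbddP' x
    calc Real.sqrt ((m:ℝ)+1) * ‖pf P' (x:ℝ)‖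
        ≤ Real.sqrt ((m:ℝ)+1) * supNorm (Set.Icc (-1) 1) (pf P') :=
          mul_le_mul_of_nonneg_left h7 hsqrt_pos.le
      _ ≤ Real.sqrt ((m:ℝ)+1) * C1const m n ζ σ ε :=
          mul_le_mul_of_nonneg_left h5 hsqrt_pos.le
end
end

section
/- Let ε > 0. For every polynomial p of degree at most n, ‖p − Q_ε(p)‖_{m,2} ≤ ε·‖p‖_w. -/
open MeasureTheory Finset

noncomputable section

section Aux

lemma jweight_intble_right {α β γ : ℝ} (hα : -1 < α) (hβ : -1 < β) (hγ : 0 < γ) :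
    IntervalIntegrable (jweight α β γ) volume 0 γ := by
  have h1 : IntervalIntegrable (fun t : ℝ => t ^ α) volume 1 0 :=
    intervalIntegral.intervalIntegrable_rpow' hα
  have h2 : IntervalIntegrable (fun x : ℝ => (1 - x) ^ α) volume 0 1 := by
    simpa using h1.comp_sub_left 1
  have h3 : IntervalIntegrable (fun x : ℝ => (1 - x / γ) ^ α) volume 0 γ := by
    have h := h2.comp_mul_right (c := γ⁻¹)
    simp only [zero_div, one_div, inv_inv] at h
    simpa [div_eq_mul_inv] using h
  have hcont : ContinuousOn (fun x : ℝ => (1 + x / γ) ^ β) (Set.uIcc 0 γ) := by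
    apply ContinuousOn.rpow_const (by fun_prop)
    intro x hx
    rw [Set.uIcc_of_le hγ.le] at hx
    have hx0 : (0:ℝ) ≤ x / γ := div_nonneg hx.1 hγ.le
    exact Or.inl (by linarith)
  exact h3.mul_continuousOn hcont

lemma jweight_intble {α β γ : ℝ} (hα : -1 < α) (hβ : -1 < β) (hγ : 0 < γ) :
    IntervalIntegrable (jweight α β γ) volume (-γ) γ := by
  have h1 := jweight_intble_right hβ hα hγ
  have h2 : IntervalIntegrable (fun x => jweight α β γ (-x)) volume 0 γ := by
    have : (fun x : ℝ => jweight α β γ (-x)) = jweight β α γ := by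
      funext x
      simp only [jweight, neg_div, sub_neg_eq_add, ← sub_eq_add_neg]
      ring
    rw [this]; exact h1
  have h3 : IntervalIntegrable (jweight α β γ) volume 0 (-γ) := by
    rw [IntervalIntegrable.iff_comp_neg]
    simpa using h2
  exact h3.symm.trans (jweight_intble_right hα hβ hγ)

lemma wIntegrable {α β γ : ℝ} (hα : -1 < α) (hβ : -1 < β) (hγ : 0 < γ) {g : ℝ → ℂ}
    (hg : Continuous g) :
    IntervalIntegrable (fun x => g x * ((jweight α β γ x : ℝ) : ℂ)) volume (-γ) γ := by
  have h := jweight_intble hα hβ hγ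
  have h2 : IntervalIntegrable (fun x => ((jweight α β γ x : ℝ) : ℂ)) volume (-γ) γ :=
    ⟨h.1.ofReal, h.2.ofReal⟩
  exact h2.continuousOn_mul hg.continuousOn

lemma discInner_sum_left {ι : Type*} (m : ℕ) (s : Finset ι) (c : ι → ℂ) (g : ι → ℝ → ℂ)
    (h : ℝ → ℂ) :
    discInner m (fun x => ∑ i ∈ s, c i * g i x) h
      = ∑ i ∈ s, c i * discInner m (g i) h := by
  unfold discInner
  simp only [Finset.sum_mul, Finset.mul_sum]
  rw [Finset.sum_comm]
  exact Finset.sum_congr rfl fun i _ => Finset.sum_congr rfl fun k _ => by ring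

lemma discInner_sum_right {ι : Type*} (m : ℕ) (t : Finset ι) (d : ι → ℂ) (h : ι → ℝ → ℂ)
    (f : ℝ → ℂ) :
    discInner m f (fun x => ∑ j ∈ t, d j * h j x)
      = ∑ j ∈ t, (starRingEnd ℂ) (d j) * discInner m f (h j) := by
  unfold discInner
  simp only [map_sum, map_mul, Finset.sum_mul, Finset.mul_sum]
  rw [Finset.sum_comm]
  exact Finset.sum_congr rfl fun j _ => Finset.sum_congr rfl fun k _ => by ring

lemma discInner_self (m : ℕ) (f : ℝ → ℂ) :
    discInner m f f
      = (((2 / ((m : ℝ) + 1)) * ∑ k ∈ Finset.range (m + 1),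
          ‖f (node m k)‖ ^ 2 : ℝ) : ℂ) := by
  unfold discInner
  push_cast
  congr 1
  exact Finset.sum_congr rfl fun k _ =>
    by rw [Complex.mul_conj, ← Complex.sq_norm]; push_cast; ring

lemma pf_continuous (q : Polynomial ℂ) : Continuous (pf q) := by
  unfold pf
  exact (Polynomial.continuous _).comp Complex.continuous_ofReal

end Aux

/-- `‖p − Q_ε(p)‖_{m,2} ≤ ε ‖p‖_w` for every polynomial of degree at most
`n`. -/
theorem stmt9 (α β γ : ℝ) (hα : -1 < α) (hβ : -1 < β) (hγ : 1 < γ)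
    (m n : ℕ) (hn : 1 ≤ n) (hmn : n ≤ m)
    (ζ : Fin (n + 1) → Polynomial ℂ) (σ : Fin (n + 1) → ℝ) (hσ : ∀ i, 0 < σ i)
    (hζdeg : ∀ i, (ζ i).natDegree ≤ n)
    (hζspan : ∀ p : Polynomial ℂ, p.natDegree ≤ n → p ∈ Submodule.span ℂ (Set.range ζ))
    (hζw : ∀ i j, wInner α β γ (pf (ζ i)) (pf (ζ j)) = if i = j then 1 else 0)
    (hζd : ∀ i j, discInner m (pf (ζ i)) (pf (ζ j)) =
      if i = j then (((σ i) ^ 2 : ℝ) : ℂ) else 0)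
    (ε : ℝ) (hε : 0 < ε)
    (p : Polynomial ℂ) (hp : p.natDegree ≤ n) :
    discNorm m (fun x => pf p x - Qop m n ζ σ ε (pf p) x) ≤ ε * wNorm α β γ (pf p) := by

  classical
  have hγ0 : (0:ℝ) < γ := lt_trans one_pos hγ
  obtain ⟨c, hc⟩ := (Submodule.mem_span_range_iff_exists_fun ℂ).mp (hζspan p hp)
  have hpf : pf p = fun x => ∑ i : Fin (n+1), c i * pf (ζ i) x := by
    funext x
    rw [← hc]
    simp [pf, Polynomial.eval_finset_sum]
  -- discrete inner products of p with the ζ i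
  have hpinner : ∀ i, discInner m (pf p) (pf (ζ i)) = c i * ((σ i ^ 2 : ℝ) : ℂ) := by
    intro i
    rw [hpf, discInner_sum_left]
    simp only [hζd]
    rw [Finset.sum_eq_single i]
    · simp
    · intro j _ hji; simp [hji]
    · simp
  have hQ : ∀ x, Qop m n ζ σ ε (pf p) x
      = ∑ i ∈ Finset.univ.filter (fun i : Fin (n+1) => ε < σ i), c i * pf (ζ i) x := by
    intro x
    unfold Qop
    refine Finset.sum_congr rfl fun i hi => ?_
    rw [hpinner i]
    have hσi : ((σ i ^ 2 : ℝ) : ℂ) ≠ 0 := by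
      exact_mod_cast pow_ne_zero 2 (hσ i).ne'
    rw [mul_div_assoc, div_self hσi, mul_one]
  set T := Finset.univ.filter (fun i : Fin (n+1) => ¬ ε < σ i) with hT
  have hr : (fun x => pf p x - Qop m n ζ σ ε (pf p) x)
      = fun x => ∑ i ∈ T, c i * pf (ζ i) x := by
    funext x
    rw [hQ x]
    simp only [hpf]
    rw [← Finset.sum_filter_add_sum_filter_not Finset.univ (fun i => ε < σ i)
      (fun i => c i * pf (ζ i) x)]
    rw [add_sub_cancel_left]
  -- value of the discrete inner product of the residual with itself
  have hDval : discInner m (fun x => pf p x - Qop m n ζ σ ε (pf p) x)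
        (fun x => pf p x - Qop m n ζ σ ε (pf p) x)
      = ((∑ i ∈ T, ‖c i‖ ^ 2 * σ i ^ 2 : ℝ) : ℂ) := by
    rw [hr, discInner_sum_left]
    have hterm : ∀ i ∈ T, c i * discInner m (pf (ζ i)) (fun x => ∑ j ∈ T, c j * pf (ζ j) x)
        = ((‖c i‖ ^ 2 * σ i ^ 2 : ℝ) : ℂ) := by
      intro i hi
      rw [discInner_sum_right, Finset.sum_eq_single i]
      · rw [hζd i i, if_pos rfl,
          show c i * ((starRingEnd ℂ) (c i) * ((σ i ^ 2 : ℝ) : ℂ))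
            = (c i * (starRingEnd ℂ) (c i)) * ((σ i ^ 2 : ℝ) : ℂ) from by ring,
          Complex.mul_conj, ← Complex.sq_norm]
        push_cast; ring
      · intro j _ hji
        rw [hζd i j, if_neg (fun h => hji h.symm), mul_zero]
      · intro h; exact absurd hi h
    rw [Finset.sum_congr rfl hterm, Complex.ofReal_sum]
  have hD : (2 / ((m : ℝ) + 1)) * ∑ k ∈ Finset.range (m + 1),
        ‖pf p (node m k) - Qop m n ζ σ ε (pf p) (node m k)‖ ^ 2
      = ∑ i ∈ T, ‖c i‖ ^ 2 * σ i ^ 2 := by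
    have h := (discInner_self m (fun x => pf p x - Qop m n ζ σ ε (pf p) x)).symm.trans hDval
    exact_mod_cast h
  -- weighted inner product expansion
  have hint : ∀ i j : Fin (n+1), IntervalIntegrable
      (fun x => (c i * (starRingEnd ℂ) (c j)) *
        (pf (ζ i) x * (starRingEnd ℂ) (pf (ζ j) x) * ((jweight α β γ x : ℝ) : ℂ)))
      volume (-γ) γ := by
    intro i j
    have hgc : Continuous (fun x => (c i * (starRingEnd ℂ) (c j)) *
        (pf (ζ i) x * (starRingEnd ℂ) (pf (ζ j) x))) := by
      apply continuous_const.mul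
      exact (pf_continuous (ζ i)).mul (Complex.continuous_conj.comp (pf_continuous (ζ j)))
    have h := wIntegrable hα hβ hγ0 hgc
    simpa [mul_assoc] using h
  have hWexp : wInner α β γ (pf p) (pf p)
      = ∑ i : Fin (n+1), ∑ j : Fin (n+1),
          (c i * (starRingEnd ℂ) (c j)) * wInner α β γ (pf (ζ i)) (pf (ζ j)) := by
    unfold wInner
    have h1 : ∀ x : ℝ, pf p x * (starRingEnd ℂ) (pf p x) * ((jweight α β γ x : ℝ) : ℂ)
        = ∑ i : Fin (n+1), ∑ j : Fin (n+1), (c i * (starRingEnd ℂ) (c j)) *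
            (pf (ζ i) x * (starRingEnd ℂ) (pf (ζ j) x) * ((jweight α β γ x : ℝ) : ℂ)) := by
      intro x
      simp only [hpf]
      simp only [map_sum, map_mul, Finset.sum_mul, Finset.mul_sum]
      rw [Finset.sum_comm]
      refine Finset.sum_congr rfl fun i _ => Finset.sum_congr rfl fun j _ => by ring
    simp only [h1]
    rw [intervalIntegral.integral_finset_sum]
    · refine Finset.sum_congr rfl fun i _ => ?_
      rw [intervalIntegral.integral_finset_sum fun j _ => hint i j]
      exact Finset.sum_congr rfl fun j _ => intervalIntegral.integral_const_mul _ _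
    · intro i _
      have h := IntervalIntegrable.sum (μ := volume) Finset.univ fun j _ => hint i j
      have e : (∑ j : Fin (n+1), fun x => (c i * (starRingEnd ℂ) (c j)) *
            (pf (ζ i) x * (starRingEnd ℂ) (pf (ζ j) x) * ((jweight α β γ x : ℝ) : ℂ)))
          = fun x => ∑ j : Fin (n+1), (c i * (starRingEnd ℂ) (c j)) *
            (pf (ζ i) x * (starRingEnd ℂ) (pf (ζ j) x) * ((jweight α β γ x : ℝ) : ℂ)) := by
        funext x
        simp [Finset.sum_apply]
      rw [← e]
      exact h
  have hWval : wInner α β γ (pf p) (pf p)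
      = ((∑ i : Fin (n+1), ‖c i‖ ^ 2 : ℝ) : ℂ) := by
    rw [hWexp]
    have hterm : ∀ i ∈ (Finset.univ : Finset (Fin (n+1))),
        (∑ j : Fin (n+1), (c i * (starRingEnd ℂ) (c j)) * wInner α β γ (pf (ζ i)) (pf (ζ j)))
        = ((‖c i‖ ^ 2 : ℝ) : ℂ) := by
      intro i _
      rw [Finset.sum_eq_single i]
      · rw [hζw i i, if_pos rfl, mul_one, Complex.mul_conj, ← Complex.sq_norm]
      · intro j _ hji
        rw [hζw i j, if_neg (fun h => hji h.symm), mul_zero]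
      · simp
    rw [Finset.sum_congr rfl hterm, Complex.ofReal_sum]
  have hWofReal : wInner α β γ (pf p) (pf p)
      = ((∫ x in (-γ)..γ, ‖pf p x‖ ^ 2 * jweight α β γ x : ℝ) : ℂ) := by
    unfold wInner
    rw [← intervalIntegral.integral_ofReal]
    refine intervalIntegral.integral_congr fun x _ => ?_
    push_cast
    rw [Complex.mul_conj, ← Complex.sq_norm]
    push_cast; ring
  have hW : (∫ x in (-γ)..γ, ‖pf p x‖ ^ 2 * jweight α β γ x)
      = ∑ i : Fin (n+1), ‖c i‖ ^ 2 := by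
    have h := hWofReal.symm.trans hWval
    exact_mod_cast h
  -- put everything together
  unfold discNorm wNorm
  rw [hD, hW]
  have hTle : ∑ i ∈ T, ‖c i‖ ^ 2 * σ i ^ 2
      ≤ ε ^ 2 * ∑ i : Fin (n+1), ‖c i‖ ^ 2 := by
    have step1 : ∑ i ∈ T, ‖c i‖ ^ 2 * σ i ^ 2
        ≤ ∑ i ∈ T, ε ^ 2 * ‖c i‖ ^ 2 := by
      refine Finset.sum_le_sum fun i hi => ?_
      have hσε : σ i ≤ ε := by
        have := (Finset.mem_filter.mp hi).2
        exact le_of_not_gt this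
      have h2 : σ i ^ 2 ≤ ε ^ 2 := pow_le_pow_left₀ (hσ i).le hσε 2
      calc ‖c i‖ ^ 2 * σ i ^ 2 ≤ ‖c i‖ ^ 2 * ε ^ 2 :=
            mul_le_mul_of_nonneg_left h2 (by positivity)
        _ = ε ^ 2 * ‖c i‖ ^ 2 := by ring
    have step2 : ∑ i ∈ T, ε ^ 2 * ‖c i‖ ^ 2
        ≤ ∑ i : Fin (n+1), ε ^ 2 * ‖c i‖ ^ 2 := by
      refine Finset.sum_le_sum_of_subset_of_nonneg (Finset.filter_subset _ _)
        fun i _ _ => by positivity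
    calc _ ≤ _ := step1
      _ ≤ _ := step2
      _ = ε ^ 2 * ∑ i : Fin (n+1), ‖c i‖ ^ 2 := by rw [Finset.mul_sum]
  calc Real.sqrt (∑ i ∈ T, ‖c i‖ ^ 2 * σ i ^ 2)
      ≤ Real.sqrt (ε ^ 2 * ∑ i : Fin (n+1), ‖c i‖ ^ 2) := Real.sqrt_le_sqrt hTle
    _ = ε * Real.sqrt (∑ i : Fin (n+1), ‖c i‖ ^ 2) := by
        rw [Real.sqrt_mul (sq_nonneg ε), Real.sqrt_sq hε.le]
end
end
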